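/- In the algebra generated by e and f with relation e·f = q·f·e + 1, for all m, n with m ≤ n the identity eᵐ·fⁿ = ∑_{k=0}^{m} binom(m,k)_q · q^((m-k)(n-k)) · ((n)_q!/(n-k)_q!) · f^(n-k)·e^(m-k) holds. -/

import Mathlib

open Finset

/-- The `q`-integer. -/
noncomputable def qInt (q : ℂ) (n : ℕ) : ℂ := ∑ i ∈ Finset.range n, q ^ i

/-- The `q`-factorial. -/
noncomputable def qFact (q : ℂ) : ℕ → ℂ
  | 0 => 1
  | n + 1 => qFact q n * qInt q (n + 1)

/-- The Gaussian binomial coefficient. -/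
noncomputable def qBinom (q : ℂ) (n k : ℕ) : ℂ := qFact q n / (qFact q k * qFact q (n - k))

lemma qInt_add (q : ℂ) (a b : ℕ) : qInt q (a + b) = qInt q a + q ^ a * qInt q b := by
  simp [qInt, Finset.sum_range_add, pow_add, Finset.mul_sum]

lemma qInt_ne_zero (q : ℂ) (hq : ∀ n : ℕ, 0 < n → q ^ n ≠ 1) (t : ℕ) : qInt q (t + 1) ≠ 0 := by
  intro h0
  have hg := geom_sum_mul q (t + 1)
  rw [show (∑ i ∈ Finset.range (t+1), q ^ i) = qInt q (t+1) from rfl, h0, zero_mul] at hg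
  exact sub_ne_zero.mpr (hq (t + 1) (Nat.succ_pos t)) hg.symm

lemma qFact_ne_zero (q : ℂ) (hq : ∀ n : ℕ, 0 < n → q ^ n ≠ 1) (t : ℕ) : qFact q t ≠ 0 := by
  induction t with
  | zero => simp [qFact]
  | succ t ih => exact mul_ne_zero ih (qInt_ne_zero q hq t)

lemma coeff_mid (q : ℂ) (hq : ∀ n : ℕ, 0 < n → q ^ n ≠ 1) (k u w : ℕ) :
    qBinom q (k+u+2) (k+1) * q ^ ((u+1)*(u+w+1)) * (qFact q (k+u+w+2) / qFact q (u+w+1))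
    = qBinom q (k+u+1) (k+1) * q ^ (u*(u+w+1)) * (qFact q (k+u+w+2) / qFact q (u+w+1)) * q ^ (u+w+1)
    + qBinom q (k+u+1) k * q ^ ((u+1)*(u+w+2)) * (qFact q (k+u+w+2) / qFact q (u+w+2)) * qInt q (u+w+2) := by
  have hF := qFact_ne_zero q hq
  have hI := qInt_ne_zero q hq
  simp only [qBinom, show k+u+2-(k+1) = u+1 from by omega, show k+u+1-(k+1) = u from by omega,
    show k+u+1-k = u+1 from by omega]
  rw [show qFact q (k+u+2) = qFact q (k+u+1) * qInt q (k+u+2) from rfl,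
      show qFact q (k+1) = qFact q k * qInt q (k+1) from rfl,
      show qFact q (u+1) = qFact q u * qInt q (u+1) from rfl,
      show qFact q (u+w+2) = qFact q (u+w+1) * qInt q (u+w+2) from rfl,
      show qInt q (k+u+2) = qInt q ((u+1)+(k+1)) from by ring_nf,
      qInt_add q (u+1) (k+1)]
  have h1 : qFact q k ≠ 0 := hF k
  have h2 : qFact q u ≠ 0 := hF u
  have h3 : qFact q (u+w+1) ≠ 0 := hF (u+w+1)
  have h4 : qInt q (u+1) ≠ 0 := hI u
  have h5 : qInt q (k+1) ≠ 0 := hI k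
  have h6 : qInt q (u+w+2) ≠ 0 := hI (u+w+1)
  field_simp
  ring

lemma coeff_top (q : ℂ) (hq : ∀ n : ℕ, 0 < n → q ^ n ≠ 1) (m w : ℕ) :
    qBinom q (m+1) (m+1) * q ^ (0*w) * (qFact q (m+1+w) / qFact q w)
    = qBinom q m m * q ^ (0*(w+1)) * (qFact q (m+1+w) / qFact q (w+1)) * qInt q (w+1) := by
  have hF := qFact_ne_zero q hq
  have hI := qInt_ne_zero q hq
  simp only [qBinom, Nat.sub_self, zero_mul, pow_zero, mul_one, one_mul]
  rw [show qFact q (w+1) = qFact q w * qInt q (w+1) from rfl,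
      show qFact q 0 = 1 from rfl, mul_one, mul_one, div_self (hF (m+1)), div_self (hF m),
      one_mul, one_mul]
  rw [div_mul_eq_mul_div, mul_comm (qFact q w) (qInt q (w+1)), ← div_div, mul_div_assoc,
      div_self (hI w), mul_one]

lemma coeff_zero (q : ℂ) (hq : ∀ n : ℕ, 0 < n → q ^ n ≠ 1) (m n : ℕ) :
    qBinom q (m+1) 0 * q ^ ((m+1-0)*(n-0)) * (qFact q n / qFact q (n-0))
    = qBinom q m 0 * q ^ ((m-0)*(n-0)) * (qFact q n / qFact q (n-0)) * q ^ (n-0) := by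
  have hF := qFact_ne_zero q hq
  simp only [Nat.sub_zero, qBinom]
  rw [show qFact q 0 = 1 from rfl, one_mul, one_mul, div_self (hF (m+1)), div_self (hF m),
      one_mul, one_mul]
  rw [show (m+1)*n = m*n + n from by ring, pow_add]
  ring

/-- In the algebra generated by `e`, `f` with relation `e f = q f e + 1`, for `m ≤ n`,
`eᵐ fⁿ = ∑_{k=0}^{m} binom(m,k)_q q^((m-k)(n-k)) ((n)_q!/(n-k)_q!) f^(n-k) e^(m-k)`. -/
theorem stmt4 (q : ℂ) (hq0 : q ≠ 0) (hq : ∀ n : ℕ, 0 < n → q ^ n ≠ 1)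
    (A : Type*) [Ring A] [Algebra ℂ A] (e f : A)
    (h : e * f = q • (f * e) + 1) (m n : ℕ) (hmn : m ≤ n) :
    e ^ m * f ^ n = ∑ k ∈ Finset.range (m + 1),
      (qBinom q m k * q ^ ((m - k) * (n - k)) * (qFact q n / qFact q (n - k))) •
        (f ^ (n - k) * e ^ (m - k)) := by
  have hF := qFact_ne_zero q hq
  have hI := qInt_ne_zero q hq
  have hcomm : ∀ j : ℕ, e * f ^ (j + 1)
      = q ^ (j+1) • (f ^ (j+1) * e) + qInt q (j+1) • f ^ j := by
    intro j
    induction j with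
    | zero => simpa [qInt] using h
    | succ j ihj =>
      have step : e * f ^ (j+2) = (e * f ^ (j+1)) * f := by rw [mul_assoc, ← pow_succ]
      rw [step, ihj, add_mul, smul_mul_assoc, smul_mul_assoc,
          mul_assoc (f ^ (j+1)) e f, h, mul_add, mul_one, mul_smul_comm, smul_add, smul_smul,
          ← mul_assoc (f ^ (j+1)) f e, ← pow_succ f (j+1), ← pow_succ f j,
          show qInt q (j+2) = qInt q (j+1) + q^(j+1) from by simp [qInt, Finset.sum_range_succ],
          add_smul, pow_succ q (j+1)]
      abel
  revert hmn
  induction m with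
  | zero =>
    intro _
    rw [Finset.sum_range_one]
    simp [qBinom, qFact, div_self (hF n)]
  | succ m ih =>
    intro hmn
    have ih' := ih (by omega)
    have key : ∀ k : ℕ, k ≤ m →
        e * (f ^ (n - k) * e ^ (m - k))
          = q ^ (n - k) • (f ^ (n - k) * e ^ (m + 1 - k))
            + qInt q (n - k) • (f ^ (n - (k+1)) * e ^ (m - k)) := by
      intro k hk
      have h1 : n - k = (n - (k+1)) + 1 := by omega
      rw [← mul_assoc, h1, hcomm (n - (k+1))]
      rw [add_mul, smul_mul_assoc, smul_mul_assoc, mul_assoc, ← pow_succ',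
          show m - k + 1 = m + 1 - k from by omega]
    calc e ^ (m+1) * f ^ n = e * (e ^ m * f ^ n) := by rw [pow_succ', mul_assoc]
      _ = ∑ k ∈ Finset.range (m+1),
            (qBinom q m k * q ^ ((m - k) * (n - k)) * (qFact q n / qFact q (n - k))) •
              (e * (f ^ (n - k) * e ^ (m - k))) := by
          rw [ih', Finset.mul_sum]
          exact Finset.sum_congr rfl fun k _ => (mul_smul_comm _ _ _)
      _ = ∑ k ∈ Finset.range (m+1),
            ((qBinom q m k * q ^ ((m - k) * (n - k)) * (qFact q n / qFact q (n - k)) * q ^ (n-k)) •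
               (f ^ (n - k) * e ^ (m + 1 - k))
             + (qBinom q m k * q ^ ((m - k) * (n - k)) * (qFact q n / qFact q (n - k)) * qInt q (n-k)) •
               (f ^ (n - (k+1)) * e ^ (m - k))) := by
          refine Finset.sum_congr rfl fun k hk => ?_
          rw [key k (by have := Finset.mem_range.mp hk; omega),
              smul_add, smul_smul, smul_smul]
      _ = (∑ k ∈ Finset.range (m+1),
            (qBinom q m k * q ^ ((m - k) * (n - k)) * (qFact q n / qFact q (n - k)) * q ^ (n-k)) •
               (f ^ (n - k) * e ^ (m + 1 - k)))
          + ∑ k ∈ Finset.range (m+1),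
            (qBinom q m k * q ^ ((m - k) * (n - k)) * (qFact q n / qFact q (n - k)) * qInt q (n-k)) •
               (f ^ (n - (k+1)) * e ^ (m - k)) := Finset.sum_add_distrib
      _ = ∑ k ∈ Finset.range (m+1+1),
            (qBinom q (m+1) k * q ^ ((m + 1 - k) * (n - k)) * (qFact q n / qFact q (n - k))) •
              (f ^ (n - k) * e ^ (m + 1 - k)) := by
          rw [Finset.sum_range_succ' (fun k =>
                (qBinom q (m+1) k * q ^ ((m + 1 - k) * (n - k)) * (qFact q n / qFact q (n - k))) •
                  (f ^ (n - k) * e ^ (m + 1 - k))) (m+1),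
              Finset.sum_range_succ (fun k =>
                (qBinom q (m+1) (k+1) * q ^ ((m + 1 - (k+1)) * (n - (k+1))) * (qFact q n / qFact q (n - (k+1)))) •
                  (f ^ (n - (k+1)) * e ^ (m + 1 - (k+1)))) m,
              Finset.sum_range_succ' (fun k =>
                (qBinom q m k * q ^ ((m - k) * (n - k)) * (qFact q n / qFact q (n - k)) * q ^ (n-k)) •
                  (f ^ (n - k) * e ^ (m + 1 - k))) m,
              Finset.sum_range_succ (fun k =>
                (qBinom q m k * q ^ ((m - k) * (n - k)) * (qFact q n / qFact q (n - k)) * qInt q (n-k)) •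
                  (f ^ (n - (k+1)) * e ^ (m - k))) m]
          have e0 : (qBinom q (m+1) 0 * q ^ ((m + 1 - 0) * (n - 0)) * (qFact q n / qFact q (n - 0))) •
                  (f ^ (n - 0) * e ^ (m + 1 - 0))
              = (qBinom q m 0 * q ^ ((m - 0) * (n - 0)) * (qFact q n / qFact q (n - 0)) * q ^ (n-0)) •
                  (f ^ (n - 0) * e ^ (m + 1 - 0)) := by
            rw [coeff_zero q hq m n]
          have etop : (qBinom q (m+1) (m+1) * q ^ ((m + 1 - (m+1)) * (n - (m+1))) * (qFact q n / qFact q (n - (m+1)))) •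
                  (f ^ (n - (m+1)) * e ^ (m + 1 - (m+1)))
              = (qBinom q m m * q ^ ((m - m) * (n - m)) * (qFact q n / qFact q (n - m)) * qInt q (n-m)) •
                  (f ^ (n - (m+1)) * e ^ (m - m)) := by
            obtain ⟨w, rfl⟩ : ∃ w, n = m + 1 + w := ⟨n - (m+1), by omega⟩
            simp only [show m+1+w-(m+1) = w from by omega, show m+1+w-m = w+1 from by omega,
              show m+1-(m+1) = 0 from by omega, show m-m = 0 from by omega]
            rw [coeff_top q hq m w]
          have emid : ∀ k ∈ Finset.range m,
              (qBinom q (m+1) (k+1) * q ^ ((m + 1 - (k+1)) * (n - (k+1))) * (qFact q n / qFact q (n - (k+1)))) •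
                  (f ^ (n - (k+1)) * e ^ (m + 1 - (k+1)))
              = (qBinom q m (k+1) * q ^ ((m - (k+1)) * (n - (k+1))) * (qFact q n / qFact q (n - (k+1))) * q ^ (n-(k+1))) •
                  (f ^ (n - (k+1)) * e ^ (m + 1 - (k+1)))
                + (qBinom q m k * q ^ ((m - k) * (n - k)) * (qFact q n / qFact q (n - k)) * qInt q (n-k)) •
                  (f ^ (n - (k+1)) * e ^ (m - k)) := by
            intro k hk
            have hkm : k < m := Finset.mem_range.mp hk
            obtain ⟨u, hu⟩ : ∃ u, m = k + u + 1 := ⟨m - k - 1, by omega⟩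
            obtain ⟨w, hw⟩ : ∃ w, n = k + u + w + 2 := ⟨n - (k + u + 2), by omega⟩
            subst hu hw
            simp only [show k+u+1+1 = k+u+2 from rfl,
              show k+u+w+2-(k+1) = u+w+1 from by omega,
              show k+u+w+2-k = u+w+2 from by omega,
              show k+u+2-(k+1) = u+1 from by omega,
              show k+u+1-(k+1) = u from by omega,
              show k+u+1-k = u+1 from by omega]
            rw [← add_smul, coeff_mid q hq k u w]
          rw [Finset.sum_congr rfl emid, Finset.sum_add_distrib, e0, etop]
          abel
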